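/- arXiv:2211.04078 — 2 statements merged into one kernel-verified Lean document; each statement's English description precedes it below -/
import Mathlib

section
/- Let a, β ≥ 0, γ > 0, δ ∈ (0,1], and let f : ℝ × ℝ → ℝ. Assume (i) |f(y,z) − f(ȳ,z)| ≤ β·|y − ȳ| for all y, ȳ, z ∈ ℝ, and (ii) for all y, z, z̄ ∈ ℝ and all θ ∈ (0,1), f(y, (1−θ)z + θz̄) − θ·f(y, z̄) ≤ (1−θ)·(a + β|y| + γ|z|^{1+δ}). Then for all y₁, y₂, z₁, z₂ ∈ ℝ and all θ ∈ (0,1), f(y₁, z₁) − θ·f(y₂, z₂) ≤ (1−θ)·(a + 2β|y₂| + β|ŷ_θ| + γ|ẑ_θ|^{1+δ}), where ŷ_θ := (y₁ − θy₂)/(1−θ) and ẑ_θ := (z₁ − θz₂)/(1−θ). -/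
/-- From the Lipschitz condition in `y` and the one-sided θ-convexity
condition in `z` (hypothesis (H2.4)), one deduces the combined one-sided estimate. -/
theorem stmt_0 (a β γ δ : ℝ) (ha : 0 ≤ a) (hβ : 0 ≤ β) (hγ : 0 < γ)
    (hδ0 : 0 < δ) (hδ1 : δ ≤ 1)
    (f : ℝ → ℝ → ℝ)
    (hLip : ∀ y y' z : ℝ, |f y z - f y' z| ≤ β * |y - y'|)
    (hconv : ∀ y z z' θ : ℝ, 0 < θ → θ < 1 →
      f y ((1 - θ) * z + θ * z') - θ * f y z'
        ≤ (1 - θ) * (a + β * |y| + γ * |z| ^ (1 + δ))) :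
    ∀ y₁ y₂ z₁ z₂ θ : ℝ, 0 < θ → θ < 1 →
      f y₁ z₁ - θ * f y₂ z₂
        ≤ (1 - θ) * (a + 2 * β * |y₂| + β * |(y₁ - θ * y₂) / (1 - θ)|
            + γ * |(z₁ - θ * z₂) / (1 - θ)| ^ (1 + δ)) := by
  intro y₁ y₂ z₁ z₂ θ hθ0 hθ1
  have h1θ : (0:ℝ) < 1 - θ := by linarith
  set yh := (y₁ - θ * y₂) / (1 - θ) with hyh
  set zh := (z₁ - θ * z₂) / (1 - θ) with hzh
  have hz1 : z₁ = (1 - θ) * zh + θ * z₂ := by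
    rw [hzh, mul_div_cancel₀ _ h1θ.ne']; ring
  have h2 : f y₂ z₁ - θ * f y₂ z₂ ≤ (1 - θ) * (a + β * |y₂| + γ * |zh| ^ (1 + δ)) := by
    have := hconv y₂ zh z₂ θ hθ0 hθ1
    rwa [← hz1] at this
  have hy1 : y₁ - y₂ = (1 - θ) * (yh - y₂) := by
    rw [hyh, mul_sub, mul_div_cancel₀ _ h1θ.ne']; ring
  have h1 : f y₁ z₁ - f y₂ z₁ ≤ (1 - θ) * (β * |yh| + β * |y₂|) := by
    calc f y₁ z₁ - f y₂ z₁ ≤ |f y₁ z₁ - f y₂ z₁| := le_abs_self _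
    _ ≤ β * |y₁ - y₂| := hLip y₁ y₂ z₁
    _ = β * ((1 - θ) * |yh - y₂|) := by
        rw [hy1, abs_mul, abs_of_pos h1θ]
    _ ≤ β * ((1 - θ) * (|yh| + |y₂|)) := by
        have h := abs_sub yh y₂
        have h' : (1 - θ) * |yh - y₂| ≤ (1 - θ) * (|yh| + |y₂|) :=
          mul_le_mul_of_nonneg_left h (le_of_lt h1θ)
        exact mul_le_mul_of_nonneg_left h' hβ
    _ = (1 - θ) * (β * |yh| + β * |y₂|) := by ring
  nlinarith [h1, h2]
end

section
/- Let a, b ≥ 0 and δ ∈ (0,1], and let g : ℝ → ℝ satisfy, for all z, z̄ ∈ ℝ and all θ ∈ (0,1), g((1−θ)z + θz̄) − θ·g(z̄) ≤ (1−θ)·(a + b|z|^{1+δ}). Then for every z₀ ∈ ℝ and every z ∈ ℝ with |z| < 1, one has |g(z₀ + z) − g(z₀)| ≤ (a + 2^δ·b·|z₀|^{1+δ} + |g(z₀)| + 2^δ·b)·|z|. In particular, g is locally Lipschitz continuous on ℝ (hence continuous). -/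
open Real

/-- `(x+1)^(1+δ) ≤ 2^δ * (x^(1+δ) + 1)` for `x ≥ 0`, `δ ≥ 0`. -/
lemma pow_two_bound (x δ : ℝ) (hx : 0 ≤ x) (hδ : 0 ≤ δ) :
    (x + 1) ^ (1 + δ) ≤ 2 ^ δ * (x ^ (1 + δ) + 1) := by
  have h := NNReal.rpow_add_le_mul_rpow_add_rpow (Real.toNNReal x) 1
    (p := 1 + δ) (by linarith)
  have h' := NNReal.coe_le_coe.mpr h
  push_cast [NNReal.coe_rpow, Real.coe_toNNReal x hx] at h'
  have hs : (1:ℝ) + δ - 1 = δ := by ring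
  rw [hs] at h'
  convert h' using 2 <;> norm_num

/-- Key local Lipschitz estimate. -/
lemma key_est (a b δ : ℝ) (ha : 0 ≤ a) (hb : 0 ≤ b) (hδ0 : 0 < δ)
    (g : ℝ → ℝ)
    (h : ∀ z z' θ : ℝ, 0 < θ → θ < 1 →
      g ((1 - θ) * z + θ * z') - θ * g z' ≤ (1 - θ) * (a + b * |z| ^ (1 + δ)))
    (z₀ z : ℝ) (hz : |z| < 1) :
    |g (z₀ + z) - g z₀| ≤ (a + b * (|z₀| + 1) ^ (1 + δ) + |g z₀|) * |z| := by
  rcases eq_or_ne z 0 with rfl | hz0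
  · simp
  have ht0 : 0 < |z| := abs_pos.mpr hz0
  set t : ℝ := |z| with htdef
  have htne : t ≠ 0 := ne_of_gt ht0
  have hp1 : (1:ℝ) ≤ 1 + δ := by linarith
  have hM : 0 ≤ (|z₀| + 1) ^ (1 + δ) := rpow_nonneg (by positivity) _
  -- bound for the shifted points
  have habs1 : |z₀ + z / t| ≤ |z₀| + 1 := by
    calc |z₀ + z / t| ≤ |z₀| + |z / t| := abs_add_le _ _
    _ = |z₀| + 1 := by rw [abs_div, abs_abs, div_self htne]
  have habs2 : |z₀ - z / t| ≤ |z₀| + 1 := by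
    calc |z₀ - z / t| ≤ |z₀| + |z / t| := abs_sub _ _
    _ = |z₀| + 1 := by rw [abs_div, abs_abs, div_self htne]
  have hr1 : |z₀ + z / t| ^ (1 + δ) ≤ (|z₀| + 1) ^ (1 + δ) :=
    Real.rpow_le_rpow (abs_nonneg _) habs1 (by linarith)
  have hr2 : |z₀ - z / t| ^ (1 + δ) ≤ (|z₀| + 1) ^ (1 + δ) :=
    Real.rpow_le_rpow (abs_nonneg _) habs2 (by linarith)
  have hbr1 : b * |z₀ + z / t| ^ (1 + δ) ≤ b * (|z₀| + 1) ^ (1 + δ) :=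
    mul_le_mul_of_nonneg_left hr1 hb
  have hbr2 : b * |z₀ - z / t| ^ (1 + δ) ≤ b * (|z₀| + 1) ^ (1 + δ) :=
    mul_le_mul_of_nonneg_left hr2 hb
  have hgabs : -g z₀ ≤ |g z₀| := neg_le_abs _
  -- upper bound
  have h1 := h (z₀ + z / t) z₀ (1 - t) (by linarith) (by linarith)
  have harg1 : (1 - (1 - t)) * (z₀ + z / t) + (1 - t) * z₀ = z₀ + z := by
    field_simp
    ring
  rw [harg1] at h1
  have hupper : g (z₀ + z) - g z₀ ≤ (a + b * (|z₀| + 1) ^ (1 + δ) + |g z₀|) * t := by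
    linarith [h1, mul_le_mul_of_nonneg_left hbr1 ht0.le, mul_le_mul_of_nonneg_left hgabs ht0.le]
  -- lower bound
  have h1t : (0:ℝ) < 1 + t := by linarith
  have hθ : (0:ℝ) < 1 / (1 + t) := by positivity
  have hθ1 : 1 / (1 + t) < 1 := by
    rw [div_lt_one h1t]; linarith
  have h2 := h (z₀ - z / t) (z₀ + z) (1 / (1 + t)) hθ hθ1
  have harg2 : (1 - 1 / (1 + t)) * (z₀ - z / t) + (1 / (1 + t)) * (z₀ + z) = z₀ := by
    field_simp
    ring
  rw [harg2] at h2
  have hne : (1:ℝ) + t ≠ 0 := ne_of_gt h1t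
  have e1 : (1 + t) * (1 - 1 / (1 + t)) = t := by field_simp; ring
  have e2 : (1 + t) * (1 / (1 + t)) = 1 := by field_simp
  have h2' : (1 + t) * g z₀ - g (z₀ + z)
      ≤ t * (a + b * |z₀ - z / t| ^ (1 + δ)) := by
    calc (1 + t) * g z₀ - g (z₀ + z)
        = (1 + t) * (g z₀ - (1 / (1 + t)) * g (z₀ + z))
            + ((1 + t) * (1 / (1 + t)) - 1) * g (z₀ + z) := by ring
      _ = (1 + t) * (g z₀ - (1 / (1 + t)) * g (z₀ + z)) := by rw [e2]; ring
      _ ≤ (1 + t) * ((1 - 1 / (1 + t)) * (a + b * |z₀ - z / t| ^ (1 + δ))) :=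
          mul_le_mul_of_nonneg_left h2 h1t.le
      _ = t * (a + b * |z₀ - z / t| ^ (1 + δ)) := by rw [← mul_assoc, e1]
  have hlower : g z₀ - g (z₀ + z) ≤ (a + b * (|z₀| + 1) ^ (1 + δ) + |g z₀|) * t := by
    linarith [h2', mul_le_mul_of_nonneg_left hbr2 ht0.le, mul_le_mul_of_nonneg_left hgabs ht0.le]
  rw [abs_le]
  constructor <;> linarith [hupper, hlower]

/-- The one-sided θ-convexity condition (4.3) implies a local Lipschitz
estimate, hence local Lipschitz continuity (and continuity). -/
theorem stmt_1 (a b δ : ℝ) (ha : 0 ≤ a) (hb : 0 ≤ b) (hδ0 : 0 < δ) (hδ1 : δ ≤ 1)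
    (g : ℝ → ℝ)
    (h : ∀ z z' θ : ℝ, 0 < θ → θ < 1 →
      g ((1 - θ) * z + θ * z') - θ * g z' ≤ (1 - θ) * (a + b * |z| ^ (1 + δ))) :
    (∀ z₀ z : ℝ, |z| < 1 →
      |g (z₀ + z) - g z₀|
        ≤ (a + 2 ^ δ * b * |z₀| ^ (1 + δ) + |g z₀| + 2 ^ δ * b) * |z|)
    ∧ LocallyLipschitz g ∧ Continuous g := by
  -- main estimate
  have main : ∀ z₀ z : ℝ, |z| < 1 →
      |g (z₀ + z) - g z₀|
        ≤ (a + 2 ^ δ * b * |z₀| ^ (1 + δ) + |g z₀| + 2 ^ δ * b) * |z| := by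
    intro z₀ z hz
    have hkey := key_est a b δ ha hb hδ0 g h z₀ z hz
    have hpw := pow_two_bound |z₀| δ (abs_nonneg _) hδ0.le
    have hbpw : b * (|z₀| + 1) ^ (1 + δ) ≤ 2 ^ δ * b * |z₀| ^ (1 + δ) + 2 ^ δ * b := by
      nlinarith [mul_le_mul_of_nonneg_left hpw hb]
    calc |g (z₀ + z) - g z₀| ≤ (a + b * (|z₀| + 1) ^ (1 + δ) + |g z₀|) * |z| := hkey
    _ ≤ (a + 2 ^ δ * b * |z₀| ^ (1 + δ) + |g z₀| + 2 ^ δ * b) * |z| := by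
        apply mul_le_mul_of_nonneg_right _ (abs_nonneg _)
        linarith
  have h2δ : (0:ℝ) ≤ (2:ℝ) ^ δ := rpow_nonneg (by norm_num) δ
  have hCnn : ∀ x : ℝ, 0 ≤ a + 2 ^ δ * b * |x| ^ (1 + δ) + |g x| + 2 ^ δ * b := by
    intro x
    have h1 : (0:ℝ) ≤ |x| ^ (1 + δ) := rpow_nonneg (abs_nonneg x) _
    positivity
  have hll : LocallyLipschitz g := by
    intro x₀
    set K : ℝ := a + 2 ^ δ * b * (|x₀| + 1) ^ (1 + δ)
        + (2 * |g x₀| + (a + 2 ^ δ * b * |x₀| ^ (1 + δ) + |g x₀| + 2 ^ δ * b)) + 2 ^ δ * b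
      with hKdef
    have hCK : ∀ x ∈ Metric.ball x₀ (1/2 : ℝ),
        a + 2 ^ δ * b * |x| ^ (1 + δ) + |g x| + 2 ^ δ * b ≤ K := by
      intro x hx
      rw [Metric.mem_ball, Real.dist_eq] at hx
      have hxabs : |x| ≤ |x₀| + 1 := by
        calc |x| = |x₀ + (x - x₀)| := by ring_nf
        _ ≤ |x₀| + |x - x₀| := abs_add_le _ _
        _ ≤ |x₀| + 1 := by linarith
      have hrp : |x| ^ (1 + δ) ≤ (|x₀| + 1) ^ (1 + δ) :=
        Real.rpow_le_rpow (abs_nonneg _) hxabs (by linarith)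
      have h2δb : (0:ℝ) ≤ (2:ℝ) ^ δ * b := by positivity
      have hgx : |g x| ≤ 2 * |g x₀|
          + (a + 2 ^ δ * b * |x₀| ^ (1 + δ) + |g x₀| + 2 ^ δ * b) := by
        have hest := main x₀ (x - x₀) (by linarith)
        rw [add_sub_cancel] at hest
        have h1 : |g x| - |g x₀| ≤ |g x - g x₀| := abs_sub_abs_le_abs_sub _ _
        have h2 : (a + 2 ^ δ * b * |x₀| ^ (1 + δ) + |g x₀| + 2 ^ δ * b) * |x - x₀|
            ≤ (a + 2 ^ δ * b * |x₀| ^ (1 + δ) + |g x₀| + 2 ^ δ * b) * 1 :=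
          mul_le_mul_of_nonneg_left (by linarith) (hCnn x₀)
        linarith [hest, h1, h2, abs_nonneg (g x₀)]
      rw [hKdef]
      linarith [mul_le_mul_of_nonneg_left hrp h2δb]
    refine ⟨K.toNNReal, Metric.ball x₀ (1/2), Metric.ball_mem_nhds x₀ (by norm_num), ?_⟩
    apply LipschitzOnWith.of_dist_le_mul
    intro x hx y hy
    rw [Real.dist_eq, Real.dist_eq]
    have hxy : |y - x| < 1 := by
      rw [Metric.mem_ball, Real.dist_eq] at hx hy
      calc |y - x| = |(y - x₀) - (x - x₀)| := by ring_nf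
      _ ≤ |y - x₀| + |x - x₀| := abs_sub _ _
      _ < 1 := by linarith
    have hest := main x (y - x) hxy
    rw [add_sub_cancel] at hest
    have hCx : a + 2 ^ δ * b * |x| ^ (1 + δ) + |g x| + 2 ^ δ * b ≤ K := hCK x hx
    have hKle : K ≤ (K.toNNReal : ℝ) := by
      rw [Real.coe_toNNReal']
      exact le_max_left _ _
    calc |g x - g y| = |g y - g x| := abs_sub_comm _ _
    _ ≤ (a + 2 ^ δ * b * |x| ^ (1 + δ) + |g x| + 2 ^ δ * b) * |y - x| := hest
    _ ≤ K * |y - x| := mul_le_mul_of_nonneg_right hCx (abs_nonneg _)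
    _ ≤ (K.toNNReal : ℝ) * |y - x| := mul_le_mul_of_nonneg_right hKle (abs_nonneg _)
    _ = (K.toNNReal : ℝ) * |x - y| := by rw [abs_sub_comm]
  exact ⟨main, hll, hll.continuous⟩
end
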